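/- For every n ∈ ℕ, the determinant of the Hankel matrix H(n+1) with entries i^{τ(s+t)} is a nonzero Gaussian integer; in particular every Hankel matrix of the sequence (i^{τ(n)})_{n≥0} is invertible. -/

import Mathlib

/-- Binary digit-sum (Thue–Morse) function. -/
def tau (n : ℕ) : ℕ := (Nat.digits 2 n).sum

/-- The `n × n` Hankel matrix of the sequence `i^{τ(k)}`. -/
noncomputable def Hmat (n : ℕ) : Matrix (Fin n) (Fin n) ℂ :=
  Matrix.of fun s t => Complex.I ^ tau (s.val + t.val)

open Matrix Complex

namespace TMaux



noncomputable def u (k : ℕ) : ℂ := Complex.I ^ tau k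

noncomputable def Hk (f : ℕ → ℂ) (n : ℕ) : Matrix (Fin n) (Fin n) ℂ :=
  Matrix.of fun s t => f (s.1 + t.1)

lemma tau_two_mul (k : ℕ) : tau (2 * k) = tau k := by
  rcases Nat.eq_zero_or_pos k with h | h
  · simp [h]
  · unfold tau
    rw [Nat.digits_def' (by norm_num : 1 < 2) (by omega)]
    simp [Nat.mul_div_cancel_left, Nat.mul_mod_right]

lemma tau_two_mul_add_one (k : ℕ) : tau (2 * k + 1) = tau k + 1 := by
  unfold tau
  rw [Nat.digits_def' (by norm_num : 1 < 2) (by omega)]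
  have h1 : (2 * k + 1) % 2 = 1 := by omega
  have h2 : (2 * k + 1) / 2 = k := by omega
  rw [h1, h2]
  simp [Nat.add_comm]

lemma u_even (k : ℕ) : u (2 * k) = u k := by rw [u, u, tau_two_mul]

lemma u_odd (k : ℕ) : u (2 * k + 1) = Complex.I * u k := by
  rw [u, u, tau_two_mul_add_one, pow_succ, mul_comm]

/-- parity equivalence for even size -/
def pe (m : ℕ) : Fin m ⊕ Fin m ≃ Fin (2 * m) where
  toFun := Sum.elim (fun a => ⟨2 * a.1, by omega⟩) (fun a => ⟨2 * a.1 + 1, by omega⟩)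
  invFun := fun s => if h : s.1 % 2 = 0 then Sum.inl ⟨s.1 / 2, by omega⟩
    else Sum.inr ⟨s.1 / 2, by omega⟩
  left_inv := by
    rintro (a | a) <;> dsimp only [Sum.elim_inl, Sum.elim_inr]
    · rw [dif_pos (by omega)]; congr 1; apply Fin.ext; simp
    · rw [dif_neg (by omega)]; congr 1; apply Fin.ext; simp; omega
  right_inv := by
    intro s
    dsimp only
    by_cases h : s.1 % 2 = 0
    · rw [dif_pos h]; apply Fin.ext; simp; omega
    · rw [dif_neg h]; apply Fin.ext; simp; omega

/-- parity equivalence for odd size -/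
def po (m : ℕ) : Fin (m + 1) ⊕ Fin m ≃ Fin (2 * m + 1) where
  toFun := Sum.elim (fun a => ⟨2 * a.1, by omega⟩) (fun a => ⟨2 * a.1 + 1, by omega⟩)
  invFun := fun s => if h : s.1 % 2 = 0 then Sum.inl ⟨s.1 / 2, by omega⟩
    else Sum.inr ⟨s.1 / 2, by omega⟩
  left_inv := by
    rintro (a | a) <;> dsimp only [Sum.elim_inl, Sum.elim_inr]
    · rw [dif_pos (by omega)]; congr 1; apply Fin.ext; simp
    · rw [dif_neg (by omega)]; congr 1; apply Fin.ext; simp; omega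
  right_inv := by
    intro s
    dsimp only
    by_cases h : s.1 % 2 = 0
    · rw [dif_pos h]; apply Fin.ext; simp; omega
    · rw [dif_neg h]; apply Fin.ext; simp; omega

lemma subm_even (f : ℕ → ℂ) (m : ℕ) :
    (Hk f (2 * m)).submatrix (pe m) (pe m) =
      fromBlocks (of fun a b : Fin m => f (2 * (a.1 + b.1)))
        (of fun (a : Fin m) (b : Fin m) => f (2 * (a.1 + b.1) + 1))
        (of fun (a : Fin m) (b : Fin m) => f (2 * (a.1 + b.1) + 1))
        (of fun (a : Fin m) (b : Fin m) => f (2 * (a.1 + b.1) + 2)) := by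
  ext s t
  rcases s with a | a <;> rcases t with b | b <;>
    simp [Hk, pe, fromBlocks] <;> congr 1 <;> omega

lemma subm_odd (f : ℕ → ℂ) (m : ℕ) :
    (Hk f (2 * m + 1)).submatrix (po m) (po m) =
      fromBlocks (of fun a b : Fin (m + 1) => f (2 * (a.1 + b.1)))
        (of fun (a : Fin (m + 1)) (b : Fin m) => f (2 * (a.1 + b.1) + 1))
        (of fun (a : Fin m) (b : Fin (m + 1)) => f (2 * (a.1 + b.1) + 1))
        (of fun (a : Fin m) (b : Fin m) => f (2 * (a.1 + b.1) + 2)) := by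
  ext s t
  rcases s with a | a <;> rcases t with b | b <;>
    simp [Hk, po, fromBlocks] <;> congr 1 <;> omega

variable {m : ℕ} {J : Type*}

/-- embedding matrix for e : Fin m → Fin (m+1) -/
noncomputable def emb (e : Fin m → Fin (m + 1)) : Matrix (Fin m) (Fin (m + 1)) ℂ :=
  Matrix.of fun a b => if b = e a then 1 else 0

lemma emb_mul (e : Fin m → Fin (m + 1)) (M : Matrix (Fin (m + 1)) J ℂ) :
    emb e * M = Matrix.of fun a j => M (e a) j := by
  ext a j
  simp [emb, Matrix.mul_apply]

lemma mul_emb_t (e : Fin m → Fin (m + 1)) (M : Matrix J (Fin (m + 1)) ℂ) :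
    M * (emb e)ᵀ = Matrix.of fun j b => M j (e b) := by
  ext j b
  simp [emb, Matrix.mul_apply]

lemma det_ABBA (A B : Matrix (Fin m) (Fin m) ℂ) :
    (fromBlocks A B B A).det = (A + B).det * (A - B).det := by
  have key : fromBlocks (1 : Matrix (Fin m) (Fin m) ℂ) (1 : Matrix (Fin m) (Fin m) ℂ)
        (0 : Matrix (Fin m) (Fin m) ℂ) (1 : Matrix (Fin m) (Fin m) ℂ) * fromBlocks A B B A *
      fromBlocks (1 : Matrix (Fin m) (Fin m) ℂ) (-1 : Matrix (Fin m) (Fin m) ℂ)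
        (0 : Matrix (Fin m) (Fin m) ℂ) (1 : Matrix (Fin m) (Fin m) ℂ) =
      fromBlocks (A + B) 0 B (A - B) := by
    rw [fromBlocks_multiply, fromBlocks_multiply]
    ext (a | a) (b | b) <;>
      simp [fromBlocks, Matrix.mul_one, Matrix.one_mul, Matrix.mul_neg, Matrix.add_apply,
        Matrix.sub_apply, Matrix.neg_apply] <;> ring
  have h1 : (fromBlocks (1 : Matrix (Fin m) (Fin m) ℂ) (1 : Matrix (Fin m) (Fin m) ℂ)
      (0 : Matrix (Fin m) (Fin m) ℂ) (1 : Matrix (Fin m) (Fin m) ℂ)).det = 1 := by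
    rw [det_fromBlocks_zero₂₁]; simp
  have h2 : (fromBlocks (1 : Matrix (Fin m) (Fin m) ℂ) (-1 : Matrix (Fin m) (Fin m) ℂ)
      (0 : Matrix (Fin m) (Fin m) ℂ) (1 : Matrix (Fin m) (Fin m) ℂ)).det = 1 := by
    rw [det_fromBlocks_zero₂₁]; simp
  have := congrArg Matrix.det key
  rwa [det_mul, det_mul, h1, h2, one_mul, mul_one, det_fromBlocks_zero₁₂] at this

lemma det_T_even (g f : ℕ → ℂ) (m : ℕ)
    (hf0 : ∀ k, f (2 * k) = g k) (hf1 : ∀ k, f (2 * k + 1) = Complex.I * g k)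
    (hA : IsUnit (Hk g m).det) :
    (Hk f (2 * m)).det = (Hk g m).det * (Hk (fun k => g k + g (k + 1)) m).det := by
  set A := Hk g m with hAdef
  set B : Matrix (Fin m) (Fin m) ℂ := Matrix.of (fun a b => g (a.1 + b.1 + 1)) with hBdef
  have e1 : (of fun a b : Fin m => f (2 * (a.1 + b.1))) = A := by
    ext a b; simp [hAdef, Hk, hf0]
  have e2 : (of fun (a : Fin m) (b : Fin m) => f (2 * (a.1 + b.1) + 1)) = Complex.I • A := by
    ext a b; simp [hAdef, Hk, hf1]
  have e4 : (of fun (a : Fin m) (b : Fin m) => f (2 * (a.1 + b.1) + 2)) = B := by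
    ext a b
    have h : 2 * (a.1 + b.1) + 2 = 2 * (a.1 + b.1 + 1) := by ring
    simp [hBdef, h, hf0]
  haveI : Invertible A := A.invertibleOfIsUnitDet hA
  rw [← det_submatrix_equiv_self (pe m) (Hk f (2 * m)), subm_even, e1, e2, e4,
    det_fromBlocks₁₁]
  congr 1
  have h1 : (Complex.I • A) * ⅟A * (Complex.I • A) = (-1 : ℂ) • A := by
    rw [Matrix.smul_mul, mul_invOf_self, Matrix.smul_mul, Matrix.one_mul, smul_smul,
      Complex.I_mul_I]
  rw [h1, neg_one_smul, sub_neg_eq_add]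
  congr 1
  ext a b
  simp [hBdef, hAdef, Hk, Matrix.add_apply]
  ring

lemma det_T_odd (g f : ℕ → ℂ) (m : ℕ)
    (hf0 : ∀ k, f (2 * k) = g k) (hf1 : ∀ k, f (2 * k + 1) = Complex.I * g k)
    (hA : IsUnit (Hk g (m + 1)).det) :
    (Hk f (2 * m + 1)).det = (Hk g (m + 1)).det * (Hk (fun k => g k + g (k + 1)) m).det := by
  set A := Hk g (m + 1) with hAdef
  set P : Matrix (Fin m) (Fin (m + 1)) ℂ := emb Fin.castSucc with hPdef
  have hAP : A * Pᵀ = Matrix.of fun (a : Fin (m + 1)) (b : Fin m) => g (a.1 + b.1) := by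
    rw [hPdef, mul_emb_t]; ext a b; simp [hAdef, Hk]
  have hPA : P * A = Matrix.of fun (a : Fin m) (b : Fin (m + 1)) => g (a.1 + b.1) := by
    rw [hPdef, emb_mul]; ext a b; simp [hAdef, Hk]
  have e1 : (of fun a b : Fin (m + 1) => f (2 * (a.1 + b.1))) = A := by
    ext a b; simp [hAdef, Hk, hf0]
  have e2 : (of fun (a : Fin (m + 1)) (b : Fin m) => f (2 * (a.1 + b.1) + 1))
      = Complex.I • (A * Pᵀ) := by
    ext a b; simp [hAP, hf1]
  have e3 : (of fun (a : Fin m) (b : Fin (m + 1)) => f (2 * (a.1 + b.1) + 1))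
      = Complex.I • (P * A) := by
    ext a b; simp [hPA, hf1]
  have e4 : (of fun (a : Fin m) (b : Fin m) => f (2 * (a.1 + b.1) + 2))
      = Matrix.of (fun (a : Fin m) (b : Fin m) => g (a.1 + b.1 + 1)) := by
    ext a b
    have h : 2 * (a.1 + b.1) + 2 = 2 * (a.1 + b.1 + 1) := by ring
    simp [h, hf0]
  haveI : Invertible A := A.invertibleOfIsUnitDet hA
  rw [← det_submatrix_equiv_self (po m) (Hk f (2 * m + 1)), subm_odd, e1, e2, e3, e4,
    det_fromBlocks₁₁]
  congr 1
  have h1 : (Complex.I • (P * A)) * ⅟A * (Complex.I • (A * Pᵀ))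
      = (-1 : ℂ) • (P * (A * Pᵀ)) := by
    rw [Matrix.smul_mul, Matrix.mul_assoc, mul_invOf_self, Matrix.mul_one, Matrix.smul_mul,
      Matrix.mul_smul, smul_smul, Complex.I_mul_I]
  rw [h1, neg_one_smul, sub_neg_eq_add]
  have h2 : P * (A * Pᵀ) = Matrix.of fun (a : Fin m) (b : Fin m) => g (a.1 + b.1) := by
    rw [hAP, hPdef, emb_mul]; ext a b; simp
  rw [h2]
  congr 1
  ext a b
  simp [Hk, Matrix.add_apply]
  ring

lemma det_S_even (g f : ℕ → ℂ) (m : ℕ) (ε α : ℂ)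
    (hε : ε * ε = 1) (hα : α * α = 2 * ε * Complex.I) (hα0 : α ≠ 0)
    (hf0 : ∀ k, f (2 * k) = α * g k)
    (hf1 : ∀ k, f (2 * k + 1) = Complex.I * g k + ε * g (k + 1))
    (hA : IsUnit (Hk g m).det) :
    (Hk f (2 * m)).det =
      (Hk (fun k => g k + g (k + 1)) m).det * (Hk (fun k => g k - g (k + 1)) m).det := by
  set A := Hk g m with hAdef
  set B : Matrix (Fin m) (Fin m) ℂ := Matrix.of (fun a b => g (a.1 + b.1 + 1)) with hBdef
  have e1 : (of fun a b : Fin m => f (2 * (a.1 + b.1))) = α • A := by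
    ext a b; simp [hAdef, Hk, hf0]
  have e2 : (of fun (a : Fin m) (b : Fin m) => f (2 * (a.1 + b.1) + 1))
      = Complex.I • A + ε • B := by
    ext a b; simp [hAdef, hBdef, Hk, hf1, Matrix.add_apply]
  have e4 : (of fun (a : Fin m) (b : Fin m) => f (2 * (a.1 + b.1) + 2)) = α • B := by
    ext a b
    have h : 2 * (a.1 + b.1) + 2 = 2 * (a.1 + b.1 + 1) := by ring
    simp [hBdef, h, hf0]
  haveI : Invertible A := A.invertibleOfIsUnitDet hA
  letI : Invertible (α • A) :=
    ⟨α⁻¹ • ⅟A,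
     by rw [Matrix.smul_mul, Matrix.mul_smul, smul_smul, invOf_mul_self,
          inv_mul_cancel₀ hα0, one_smul],
     by rw [Matrix.smul_mul, Matrix.mul_smul, smul_smul, mul_invOf_self,
          mul_inv_cancel₀ hα0, one_smul]⟩
  have hinv : ⅟(α • A) = α⁻¹ • ⅟A := rfl
  rw [← det_submatrix_equiv_self (pe m) (Hk f (2 * m)), subm_even, e1, e2, e4,
    det_fromBlocks₁₁, hinv]
  have hone : A * ⅟A = 1 := mul_invOf_self A
  have hone' : ⅟A * A = 1 := invOf_mul_self A
  have h3 : ∀ M : Matrix (Fin m) (Fin m) ℂ, A * (⅟A * M) = M := fun M => by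
    rw [← Matrix.mul_assoc, hone, Matrix.one_mul]
  have h4 : ∀ M : Matrix (Fin m) (Fin m) ℂ, ⅟A * (A * M) = M := fun M => by
    rw [← Matrix.mul_assoc, hone', Matrix.one_mul]
  have hS : α • B - (Complex.I • A + ε • B) * (α⁻¹ • ⅟A) * (Complex.I • A + ε • B)
      = α⁻¹ • (A - B * (⅟A * B)) := by
    simp only [Matrix.mul_smul, Matrix.smul_mul, Matrix.add_mul, Matrix.mul_add,
      Matrix.mul_assoc, hone, hone', h3, h4, Matrix.mul_one, Matrix.one_mul,
      smul_smul, smul_add, smul_sub]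
    match_scalars
    all_goals try field_simp
    all_goals try ring
    all_goals try linear_combination hα
    all_goals try linear_combination hε
    all_goals try linear_combination -hε
    all_goals try linear_combination -Complex.I_sq
  rw [hS, Matrix.det_smul, Matrix.det_smul]
  have hcard : Fintype.card (Fin m) = m := Fintype.card_fin m
  rw [hcard]
  have hdetS : A.det * (A - B * (⅟A * B)).det = (A + B).det * (A - B).det := by
    have := det_fromBlocks₁₁ (A := A) (B := B) (C := B) (D := A)
    rw [det_ABBA] at this
    rw [Matrix.mul_assoc B (⅟A) B] at this
    exact this.symm
  calc α ^ m * A.det * (α⁻¹ ^ m * (A - B * (⅟A * B)).det)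
      = (α * α⁻¹) ^ m * (A.det * (A - B * (⅟A * B)).det) := by ring
    _ = (A + B).det * (A - B).det := by
        rw [mul_inv_cancel₀ hα0, one_pow, one_mul, hdetS]
    _ = (Hk (fun k => g k + g (k + 1)) m).det * (Hk (fun k => g k - g (k + 1)) m).det := by
        congr 2 <;> ext a b <;>
          simp [hAdef, hBdef, Hk, Matrix.add_apply, Matrix.sub_apply]

lemma det_S_odd (g f : ℕ → ℂ) (m : ℕ) (ε α : ℂ)
    (hε : ε * ε = 1) (hα : α * α = 2 * ε * Complex.I) (hα0 : α ≠ 0)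
    (hf0 : ∀ k, f (2 * k) = α * g k)
    (hf1 : ∀ k, f (2 * k + 1) = Complex.I * g k + ε * g (k + 1))
    (hA : IsUnit (Hk g (m + 1)).det) :
    (Hk f (2 * m + 1)).det =
      α * ((Hk g (m + 1)).det * (Hk (fun k => g k - g (k + 2)) m).det) := by
  set A := Hk g (m + 1) with hAdef
  set P : Matrix (Fin m) (Fin (m + 1)) ℂ := emb Fin.castSucc with hPdef
  set S : Matrix (Fin m) (Fin (m + 1)) ℂ := emb Fin.succ with hSdef
  set G0 : Matrix (Fin m) (Fin m) ℂ := Matrix.of (fun a b => g (a.1 + b.1)) with hG0def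
  set G1 : Matrix (Fin m) (Fin m) ℂ := Matrix.of (fun a b => g (a.1 + b.1 + 1)) with hG1def
  set G2 : Matrix (Fin m) (Fin m) ℂ := Matrix.of (fun a b => g (a.1 + b.1 + 2)) with hG2def
  have hAP : A * Pᵀ = Matrix.of fun (a : Fin (m + 1)) (b : Fin m) => g (a.1 + b.1) := by
    rw [hPdef, mul_emb_t]; ext a b; simp [hAdef, Hk]
  have hAS : A * Sᵀ = Matrix.of fun (a : Fin (m + 1)) (b : Fin m) => g (a.1 + b.1 + 1) := by
    rw [hSdef, mul_emb_t]; ext a b; simp [hAdef, Hk]; all_goals (try congr 1) <;> omega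
  have hPA : P * A = Matrix.of fun (a : Fin m) (b : Fin (m + 1)) => g (a.1 + b.1) := by
    rw [hPdef, emb_mul]; ext a b; simp [hAdef, Hk]
  have hSA : S * A = Matrix.of fun (a : Fin m) (b : Fin (m + 1)) => g (a.1 + b.1 + 1) := by
    rw [hSdef, emb_mul]; ext a b; simp [hAdef, Hk]; all_goals (try congr 1) <;> omega
  have hPAP : P * (A * Pᵀ) = G0 := by rw [hAP, hPdef, emb_mul]; ext a b; simp [hG0def]
  have hPAS : P * (A * Sᵀ) = G1 := by rw [hAS, hPdef, emb_mul]; ext a b; simp [hG1def]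
  have hSAP : S * (A * Pᵀ) = G1 := by
    rw [hAP, hSdef, emb_mul]; ext a b; simp [hG1def]; all_goals (try congr 1) <;> omega
  have hSAS : S * (A * Sᵀ) = G2 := by
    rw [hAS, hSdef, emb_mul]; ext a b; simp [hG2def]; all_goals (try congr 1) <;> omega
  have e1 : (of fun a b : Fin (m + 1) => f (2 * (a.1 + b.1))) = α • A := by
    ext a b; simp [hAdef, Hk, hf0]
  have e2 : (of fun (a : Fin (m + 1)) (b : Fin m) => f (2 * (a.1 + b.1) + 1))
      = Complex.I • (A * Pᵀ) + ε • (A * Sᵀ) := by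
    ext a b; simp [hAP, hAS, hf1, Matrix.add_apply]
  have e3 : (of fun (a : Fin m) (b : Fin (m + 1)) => f (2 * (a.1 + b.1) + 1))
      = Complex.I • (P * A) + ε • (S * A) := by
    ext a b; simp [hPA, hSA, hf1, Matrix.add_apply]
  have e4 : (of fun (a : Fin m) (b : Fin m) => f (2 * (a.1 + b.1) + 2)) = α • G1 := by
    ext a b
    have h : 2 * (a.1 + b.1) + 2 = 2 * (a.1 + b.1 + 1) := by ring
    simp [hG1def, h, hf0]
  haveI : Invertible A := A.invertibleOfIsUnitDet hA
  letI : Invertible (α • A) :=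
    ⟨α⁻¹ • ⅟A,
     by rw [Matrix.smul_mul, Matrix.mul_smul, smul_smul, invOf_mul_self,
          inv_mul_cancel₀ hα0, one_smul],
     by rw [Matrix.smul_mul, Matrix.mul_smul, smul_smul, mul_invOf_self,
          mul_inv_cancel₀ hα0, one_smul]⟩
  have hinv : ⅟(α • A) = α⁻¹ • ⅟A := rfl
  rw [← det_submatrix_equiv_self (po m) (Hk f (2 * m + 1)), subm_odd, e1, e2, e3, e4,
    det_fromBlocks₁₁, hinv]
  have hone : A * ⅟A = 1 := mul_invOf_self A
  have hone' : ⅟A * A = 1 := invOf_mul_self A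
  have h4 : ∀ M : Matrix (Fin (m + 1)) (Fin m) ℂ, ⅟A * (A * M) = M := fun M => by
    rw [← Matrix.mul_assoc, hone', Matrix.one_mul]
  have hS2 : α • G1 - (Complex.I • (P * A) + ε • (S * A)) * (α⁻¹ • ⅟A) *
      (Complex.I • (A * Pᵀ) + ε • (A * Sᵀ)) = α⁻¹ • (G0 - G2) := by
    simp only [Matrix.mul_smul, Matrix.smul_mul, Matrix.add_mul, Matrix.mul_add,
      Matrix.mul_assoc, hone, hone', h4, Matrix.mul_one, Matrix.one_mul,
      smul_smul, smul_add, smul_sub, hPAP, hPAS, hSAP, hSAS]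
    match_scalars
    all_goals try field_simp
    all_goals try ring
    all_goals try linear_combination hα
    all_goals try linear_combination hε
    all_goals try linear_combination -hε
    all_goals try linear_combination -Complex.I_sq
  rw [hS2, Matrix.det_smul, Matrix.det_smul, Fintype.card_fin, Fintype.card_fin]
  have hQ : G0 - G2 = Hk (fun k => g k - g (k + 2)) m := by
    ext a b; simp [hG0def, hG2def, Hk, Matrix.sub_apply]
  rw [hQ]
  field_simp
  have hpow : α ^ m * α⁻¹ ^ m = 1 := by rw [← mul_pow, mul_inv_cancel₀ hα0, one_pow]
  linear_combination (α * A.det * (Hk (fun k => g k - g (k + 2)) m).det) * hpow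

lemma I_ne_neg_one : (1 : ℂ) + Complex.I ≠ 0 := by
  intro h
  have := congrArg Complex.im h
  simp at this

lemma one_sub_I_ne : (1 : ℂ) - Complex.I ≠ 0 := by
  intro h
  have := congrArg Complex.im h
  simp at this

lemma key : ∀ n : ℕ, (Hk u n).det ≠ 0 ∧
    (Hk (fun k => u k + u (k + 1)) n).det ≠ 0 ∧
    (Hk (fun k => u k - u (k + 1)) n).det ≠ 0 ∧
    (Hk (fun k => u k - u (k + 2)) n).det ≠ 0 := by
  intro n
  induction n using Nat.strong_induction_on with
  | _ n ih =>
  -- basic sequence facts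
  have hu0 : u 0 = 1 := by simp [u, tau]
  have hu1 : u 1 = Complex.I := by
    have := u_odd 0; simpa [hu0] using this
  have hu2 : u 2 = Complex.I := by
    have := u_even 1; rw [show (2 : ℕ) = 2 * 1 from rfl] at *; rw [this, hu1]
  have hc0 : ∀ k, (fun k => u k + u (k + 1)) (2 * k) = (1 + Complex.I) * u k := by
    intro k
    simp only
    rw [u_even, show 2 * k + 1 = 2 * k + 1 from rfl, u_odd]
    ring
  have hc1 : ∀ k, (fun k => u k + u (k + 1)) (2 * k + 1)
      = Complex.I * u k + 1 * u (k + 1) := by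
    intro k
    simp only
    rw [u_odd, show 2 * k + 1 + 1 = 2 * (k + 1) from by ring, u_even]
    ring
  have he0 : ∀ k, (fun k => u k - u (k + 1)) (2 * k) = (1 - Complex.I) * u k := by
    intro k
    simp only
    rw [u_even, u_odd]
    ring
  have he1 : ∀ k, (fun k => u k - u (k + 1)) (2 * k + 1)
      = Complex.I * u k + (-1) * u (k + 1) := by
    intro k
    simp only
    rw [u_odd, show 2 * k + 1 + 1 = 2 * (k + 1) from by ring, u_even]
    ring
  have hq0 : ∀ k, (fun k => u k - u (k + 2)) (2 * k) = (fun k => u k - u (k + 1)) k := by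
    intro k
    simp only
    rw [u_even, show 2 * k + 2 = 2 * (k + 1) from by ring, u_even]
  have hq1 : ∀ k, (fun k => u k - u (k + 2)) (2 * k + 1)
      = Complex.I * (fun k => u k - u (k + 1)) k := by
    intro k
    simp only
    rw [u_odd, show 2 * k + 1 + 2 = 2 * (k + 1) + 1 from by ring, u_odd]
    ring
  have heq : (fun k => (fun k => u k - u (k + 1)) k + (fun k => u k - u (k + 1)) (k + 1))
      = (fun k => u k - u (k + 2)) := by
    funext k; simp only; ring
  have hεp : (1 : ℂ) * 1 = 1 := by ring
  have hεm : (-1 : ℂ) * (-1) = 1 := by ring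
  have hαp : (1 + Complex.I) * (1 + Complex.I) = 2 * 1 * Complex.I := by
    have := Complex.I_sq
    linear_combination this
  have hαm : (1 - Complex.I) * (1 - Complex.I) = 2 * (-1) * Complex.I := by
    have := Complex.I_sq
    linear_combination this
  match n with
  | 0 =>
    refine ⟨?_, ?_, ?_, ?_⟩ <;> simp [Matrix.det_fin_zero]
  | 1 =>
    have h1 : ∀ f : ℕ → ℂ, (Hk f 1).det = f 0 := by
      intro f; rw [Matrix.det_fin_one]; rfl
    refine ⟨?_, ?_, ?_, ?_⟩ <;> rw [h1] <;> simp [hu0, hu1, hu2]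
    · exact I_ne_neg_one
    · exact fun h => one_sub_I_ne (by linear_combination h)
    · exact fun h => one_sub_I_ne (by linear_combination h)
  | (k + 2) =>
    rcases Nat.even_or_odd (k + 2) with he | ho
    · -- even case
      obtain ⟨j, hj⟩ := he
      obtain ⟨m, hm⟩ : ∃ m, k + 2 = 2 * m := ⟨(k + 2) / 2, by omega⟩
      have hm1 : m < k + 2 := by omega
      obtain ⟨hA, hC, hE, hQ⟩ := ih m hm1
      rw [hm]
      refine ⟨?_, ?_, ?_, ?_⟩
      · rw [det_T_even u u m u_even u_odd (isUnit_iff_ne_zero.mpr hA)]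
        exact mul_ne_zero hA hC
      · rw [det_S_even u _ m 1 (1 + Complex.I) hεp hαp I_ne_neg_one hc0 hc1
          (isUnit_iff_ne_zero.mpr hA)]
        exact mul_ne_zero hC hE
      · rw [det_S_even u _ m (-1) (1 - Complex.I) hεm hαm one_sub_I_ne he0 he1
          (isUnit_iff_ne_zero.mpr hA)]
        exact mul_ne_zero hC hE
      · rw [det_T_even (fun k => u k - u (k + 1)) _ m hq0 hq1 (isUnit_iff_ne_zero.mpr hE),
          heq]
        exact mul_ne_zero hE hQ
    · -- odd case
      obtain ⟨j, hj⟩ := ho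
      obtain ⟨m, hm⟩ : ∃ m, k + 2 = 2 * m + 1 := ⟨(k + 2) / 2, by omega⟩
      have hm1 : m < k + 2 := by omega
      have hm2 : m + 1 < k + 2 := by omega
      obtain ⟨hA, hC, hE, hQ⟩ := ih m hm1
      obtain ⟨hA', hC', hE', hQ'⟩ := ih (m + 1) hm2
      rw [hm]
      refine ⟨?_, ?_, ?_, ?_⟩
      · rw [det_T_odd u u m u_even u_odd (isUnit_iff_ne_zero.mpr hA')]
        exact mul_ne_zero hA' hC
      · rw [det_S_odd u _ m 1 (1 + Complex.I) hεp hαp I_ne_neg_one hc0 hc1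
          (isUnit_iff_ne_zero.mpr hA')]
        exact mul_ne_zero I_ne_neg_one (mul_ne_zero hA' hQ)
      · rw [det_S_odd u _ m (-1) (1 - Complex.I) hεm hαm one_sub_I_ne he0 he1
          (isUnit_iff_ne_zero.mpr hA')]
        exact mul_ne_zero one_sub_I_ne (mul_ne_zero hA' hQ)
      · rw [det_T_odd (fun k => u k - u (k + 1)) _ m hq0 hq1 (isUnit_iff_ne_zero.mpr hE'),
          heq]
        exact mul_ne_zero hE' hQ

end TMaux

open TMaux in
theorem thueMorse_hankel_det_gaussian :
    (∀ n : ℕ, (Hmat (n + 1)).det ≠ 0 ∧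
      ∃ a b : ℤ, (Hmat (n + 1)).det = (a : ℂ) + (b : ℂ) * Complex.I) ∧
    ∀ n : ℕ, IsUnit (Hmat n) := by
  have hHk : ∀ n, Hmat n = Hk u n := fun n => rfl
  constructor
  · intro n
    refine ⟨by rw [hHk]; exact (key (n + 1)).1, ?_⟩
    -- Gaussian integer entries
    set M : Matrix (Fin (n + 1)) (Fin (n + 1)) GaussianInt :=
      Matrix.of (fun s t => (⟨0, 1⟩ : GaussianInt) ^ tau (s.1 + t.1)) with hM
    have hmap : Hmat (n + 1) = M.map GaussianInt.toComplex := by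
      ext s t
      simp [Hmat, hM, Matrix.map_apply, map_pow]
      congr 1
      simp [GaussianInt.toComplex_def]
    refine ⟨M.det.re, M.det.im, ?_⟩
    rw [hmap, ← RingHom.mapMatrix_apply, ← RingHom.map_det]
    rw [GaussianInt.toComplex_def]
  · intro n
    rw [Matrix.isUnit_iff_isUnit_det]
    exact isUnit_iff_ne_zero.mpr (by rw [hHk]; exact (key n).1)
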